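/- In a rectangular grid graph R(m,n) there is a cycle of length k (i.e., with exactly k vertices) if and only if m > 1, n > 1, k is even, and 4 ≤ k ≤ m·n. -/

import Mathlib

/-- Adjacency in the infinite 2D integer grid graph `G∞`:
two lattice points are adjacent iff they are at (Euclidean) distance 1. -/
def GridAdj (u v : ℤ × ℤ) : Prop :=
  (u.1 - v.1).natAbs + (u.2 - v.2).natAbs = 1

/-- The infinite grid graph `G∞` as a simple graph on `ℤ × ℤ`. -/
def GridGraph : SimpleGraph (ℤ × ℤ) where
  Adj u v := GridAdj u v
  symm := ⟨fun u v h => by simp only [GridAdj] at *; omega⟩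
  loopless := ⟨fun u h => by simp only [GridAdj] at h; omega⟩

/-- A grid graph with vertex set `V` is solid if the subgraph of `G∞`
induced by the complement of `V` is connected. -/
def Solid (V : Set (ℤ × ℤ)) : Prop :=
  (GridGraph.induce Vᶜ).Connected

/-- Vertex set of the rectangular grid graph `R(m,n)`. -/
def RectV (m n : ℤ) : Set (ℤ × ℤ) :=
  {v | 1 ≤ v.1 ∧ v.1 ≤ m ∧ 1 ≤ v.2 ∧ v.2 ≤ n}

/-- `l` is a path from `s` to `t` in the grid graph induced by the vertex set `V`,
recorded as the list of its vertices. -/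
def IsGridPath (V : Set (ℤ × ℤ)) (l : List (ℤ × ℤ)) (s t : ℤ × ℤ) : Prop :=
  l ≠ [] ∧ (∀ v ∈ l, v ∈ V) ∧ l.Nodup ∧ l.Chain' GridAdj ∧
    l.head? = some s ∧ l.getLast? = some t

/-- `l` is a cycle in the grid graph induced by the vertex set `V`, recorded as the
list of its (distinct) vertices; consecutive vertices, and the last and first
vertices, are adjacent.  Its length (number of vertices) is `l.length`. -/
def IsGridCycle (V : Set (ℤ × ℤ)) (l : List (ℤ × ℤ)) : Prop :=
  3 ≤ l.length ∧ (∀ v ∈ l, v ∈ V) ∧ l.Nodup ∧ (l ++ l.take 1).Chain' GridAdj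

/-- The sequence of unit steps of a path (as a list of vertices). -/
def pathSteps (l : List (ℤ × ℤ)) : List (ℤ × ℤ) :=
  (l.zip l.tail).map fun p => p.2 - p.1

/-- A path is monotone if it contains no two steps in opposite directions. -/
def MonotonePath (l : List (ℤ × ℤ)) : Prop :=
  ∀ d₁ ∈ pathSteps l, ∀ d₂ ∈ pathSteps l, d₁ ≠ -d₂

/-- The first and the last step of the (sub)path `c` point in opposite directions. -/
def OppEnds (c : List (ℤ × ℤ)) : Prop :=
  3 ≤ c.length ∧
    c.getD 1 (0, 0) - c.getD 0 (0, 0) =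
      c.getD (c.length - 2) (0, 0) - c.getD (c.length - 1) (0, 0)

/-- A cave: a (contiguous) subpath whose first and last steps point in opposite
directions, which is minimal with this property. -/
def IsCave (c : List (ℤ × ℤ)) : Prop :=
  OppEnds c ∧ ∀ c', c' <:+: c → c'.length < c.length → ¬ OppEnds c'

/-- The first endpoint `p` of a cave. -/
def caveStart (c : List (ℤ × ℤ)) : ℤ × ℤ := c.getD 0 (0, 0)

/-- The second endpoint `q` of a cave. -/
def caveEnd (c : List (ℤ × ℤ)) : ℤ × ℤ := c.getD (c.length - 1) (0, 0)

/-- `v` is a lattice point strictly between `p` and `q` on the straight axis-parallel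
segment from `p` to `q` (the "vertices inside" a cave with endpoints `p`, `q`). -/
def Between (p q v : ℤ × ℤ) : Prop :=
  (p.1 = q.1 ∧ v.1 = p.1 ∧ min p.2 q.2 < v.2 ∧ v.2 < max p.2 q.2) ∨
  (p.2 = q.2 ∧ v.2 = p.2 ∧ min p.1 q.1 < v.1 ∧ v.1 < max p.1 q.1)

/-- `v` is a lattice point on the closed straight segment from `p` to `q`. -/
def OnSeg (p q v : ℤ × ℤ) : Prop := v = p ∨ v = q ∨ Between p q v

/-- The (directed) edges of a cycle given by its vertex list `l`,
including the closing edge from the last vertex back to the first. -/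
def cycEdges (l : List (ℤ × ℤ)) : List ((ℤ × ℤ) × (ℤ × ℤ)) :=
  (l ++ l.take 1).zip (l ++ l.take 1).tail

/-- The (undirected) edge `{a, b}` occurs on the cycle `l`. -/
def CycEdgeMem (l : List (ℤ × ℤ)) (a b : ℤ × ℤ) : Prop :=
  (a, b) ∈ cycEdges l ∨ (b, a) ∈ cycEdges l

/-- The (directed) edges of a path given by its vertex list `l`. -/
def pathEdges (l : List (ℤ × ℤ)) : List ((ℤ × ℤ) × (ℤ × ℤ)) := l.zip l.tail

/-- The (undirected) edge `{a, b}` occurs on the path `l`. -/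
def PathEdgeMem (l : List (ℤ × ℤ)) (a b : ℤ × ℤ) : Prop :=
  (a, b) ∈ pathEdges l ∨ (b, a) ∈ pathEdges l

/-- Number of vertical edges of the cycle `l` crossed by the rightward horizontal ray
starting at the point `(a, b + 1/2)`: vertical edges joining `(x,b)` and `(x,b+1)`
with `x > a`.  Used for the even–odd ("inside") test. -/
def vertCross (l : List (ℤ × ℤ)) (a b : ℤ) : ℕ :=
  (cycEdges l).countP fun e =>
    decide (e.1.1 = e.2.1 ∧ a < e.1.1 ∧
      ((e.1.2 = b ∧ e.2.2 = b + 1) ∨ (e.1.2 = b + 1 ∧ e.2.2 = b)))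

/-- Number of horizontal edges of the cycle `l` crossed by the upward vertical ray
starting at the point `(a + 1/2, b)`: horizontal edges joining `(a,y)` and `(a+1,y)`
with `y > b`. -/
def horizCross (l : List (ℤ × ℤ)) (a b : ℤ) : ℕ :=
  (cycEdges l).countP fun e =>
    decide (e.1.2 = e.2.2 ∧ b < e.1.2 ∧
      ((e.1.1 = a ∧ e.2.1 = a + 1) ∨ (e.1.1 = a + 1 ∧ e.2.1 = a)))

/-- The lattice point `v` lies in the closed bounded region determined by the cycle `l`
(regarded as a simple closed curve): either on the curve, or inside it by the
even–odd rule. -/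
def InClosedRegion (l : List (ℤ × ℤ)) (v : ℤ × ℤ) : Prop :=
  v ∈ l ∨ Odd (vertCross l v.1 v.2)

/-- The unit grid edge `{u, v}` lies in the closed bounded region determined by the
cycle `l`: either it is an edge of the cycle, or its midpoint is inside the cycle by
the even–odd rule. -/
def EdgeInClosedRegion (l : List (ℤ × ℤ)) (u v : ℤ × ℤ) : Prop :=
  CycEdgeMem l u v ∨
    (u.1 = v.1 ∧ Odd (vertCross l u.1 (min u.2 v.2))) ∨
    (u.2 = v.2 ∧ Odd (horizCross l (min u.1 v.1) u.2))

/-- The cave `c` of the cycle `l` is convex: the vertices and edges inside it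
(i.e. on the straight segment between its endpoints) lie in the closed bounded
region determined by `l`. -/
def ConvexCave (l c : List (ℤ × ℤ)) : Prop :=
  (∀ v, Between (caveStart c) (caveEnd c) v → InClosedRegion l v) ∧
  (∀ u v, OnSeg (caveStart c) (caveEnd c) u → OnSeg (caveStart c) (caveEnd c) v →
    GridAdj u v → EdgeInClosedRegion l u v)

/-- `c` is a cave of the cycle `l`: a cave that occurs as a contiguous subpath of the
cyclic vertex sequence of `l` (i.e. as a prefix of some rotation of `l`). -/
def CaveOfCycle (l c : List (ℤ × ℤ)) : Prop :=
  IsCave c ∧ ∃ i, c <+: l.rotate i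

/-- The cave `c` is contractible with respect to the path/cycle `l`:
no vertex inside the cave belongs to `l`. -/
def ContractibleCaveOf (l c : List (ℤ × ℤ)) : Prop :=
  ∀ v, Between (caveStart c) (caveEnd c) v → v ∉ l

/-- The straight axis-parallel segment from `p` to `q`, as the list of its lattice
points from `p` to `q` (the shortest path between `p` and `q` on their common line). -/
def segList (p q : ℤ × ℤ) : List (ℤ × ℤ) :=
  if p.1 = q.1 then
    (List.range ((q.2 - p.2).natAbs + 1)).map fun i =>
      (p.1, p.2 + (if p.2 ≤ q.2 then (i : ℤ) else -(i : ℤ)))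
  else
    (List.range ((q.1 - p.1).natAbs + 1)).map fun i =>
      (p.1 + (if p.1 ≤ q.1 then (i : ℤ) else -(i : ℤ)), p.2)

/-- Adjacency in the infinite 3D integer grid: distance 1. -/
def Grid3Adj (u v : ℤ × ℤ × ℤ) : Prop :=
  (u.1 - v.1).natAbs + (u.2.1 - v.2.1).natAbs + (u.2.2 - v.2.2).natAbs = 1

/-- Vertex set of the 3D grid graph `R(m,n,o)`. -/
def Rect3V (m n o : ℤ) : Set (ℤ × ℤ × ℤ) :=
  {v | 1 ≤ v.1 ∧ v.1 ≤ m ∧ 1 ≤ v.2.1 ∧ v.2.1 ≤ n ∧ 1 ≤ v.2.2 ∧ v.2.2 ≤ o}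

/-- `l` is a path from `s` to `t` in the 3D grid graph induced by `V`. -/
def IsGrid3Path (V : Set (ℤ × ℤ × ℤ)) (l : List (ℤ × ℤ × ℤ)) (s t : ℤ × ℤ × ℤ) : Prop :=
  l ≠ [] ∧ (∀ v ∈ l, v ∈ V) ∧ l.Nodup ∧ l.Chain' Grid3Adj ∧
    l.head? = some s ∧ l.getLast? = some t

/-- `l` is a cycle in the 3D grid graph induced by `V`. -/
def IsGrid3Cycle (V : Set (ℤ × ℤ × ℤ)) (l : List (ℤ × ℤ × ℤ)) : Prop :=
  3 ≤ l.length ∧ (∀ v ∈ l, v ∈ V) ∧ l.Nodup ∧ (l ++ l.take 1).Chain' Grid3Adj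

/-- The folding map `F` from the 3D grid `R(m,n,o)` to the rectangular grid `R(m,no)`:
`F(v) = (x(v), n(z(v)-1) + y(v))` if `z(v)` is odd, and
`F(v) = (x(v), n·z(v) - y(v) + 1)` if `z(v)` is even. -/
def foldMap (n : ℤ) (v : ℤ × ℤ × ℤ) : ℤ × ℤ :=
  if Odd v.2.2 then (v.1, n * (v.2.2 - 1) + v.2.1) else (v.1, n * v.2.2 - v.2.1 + 1)
def vsegU (x a : ℤ) (len : ℕ) : List (ℤ × ℤ) := (List.range len).map fun i : ℕ => (x, a + (i:ℤ))
def vsegD (x a : ℤ) (len : ℕ) : List (ℤ × ℤ) := (List.range len).map fun i : ℕ => (x, a - (i:ℤ))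
def hsegR (y a : ℤ) (len : ℕ) : List (ℤ × ℤ) := (List.range len).map fun i : ℕ => (a + (i:ℤ), y)

lemma chain'_map_range {α : Type*} (f : ℕ → α) (R : α → α → Prop) (len : ℕ)
    (h : ∀ i, i + 1 < len → R (f i) (f (i+1))) : ((List.range len).map f).Chain' R := by
  rw [List.Chain', List.isChain_iff_getElem]
  intro i hi
  simp only [List.length_map, List.length_range] at hi
  simp only [List.getElem_map, List.getElem_range]
  exact h i (by omega)

lemma mem_vsegU {x a : ℤ} {len : ℕ} {v : ℤ × ℤ} :
    v ∈ vsegU x a len ↔ v.1 = x ∧ a ≤ v.2 ∧ v.2 < a + len := by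
  simp only [vsegU, List.mem_map, List.mem_range]
  constructor
  · rintro ⟨i, hi, rfl⟩; simp; omega
  · rintro ⟨h1, h2, h3⟩
    exact ⟨(v.2 - a).toNat, by omega, by rw [← h1]; ext <;> simp <;> omega⟩

lemma mem_vsegD {x a : ℤ} {len : ℕ} {v : ℤ × ℤ} :
    v ∈ vsegD x a len ↔ v.1 = x ∧ a - len < v.2 ∧ v.2 ≤ a := by
  simp only [vsegD, List.mem_map, List.mem_range]
  constructor
  · rintro ⟨i, hi, rfl⟩; simp; omega
  · rintro ⟨h1, h2, h3⟩
    exact ⟨(a - v.2).toNat, by omega, by rw [← h1]; ext <;> simp <;> omega⟩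

lemma mem_hsegR {y a : ℤ} {len : ℕ} {v : ℤ × ℤ} :
    v ∈ hsegR y a len ↔ v.2 = y ∧ a ≤ v.1 ∧ v.1 < a + len := by
  simp only [hsegR, List.mem_map, List.mem_range]
  constructor
  · rintro ⟨i, hi, rfl⟩; simp; omega
  · rintro ⟨h1, h2, h3⟩
    exact ⟨(v.1 - a).toNat, by omega, by rw [← h1]; ext <;> simp <;> omega⟩

lemma length_vsegU (x a : ℤ) (len : ℕ) : (vsegU x a len).length = len := by
  simp [vsegU]
lemma length_vsegD (x a : ℤ) (len : ℕ) : (vsegD x a len).length = len := by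
  simp [vsegD]
lemma length_hsegR (y a : ℤ) (len : ℕ) : (hsegR y a len).length = len := by
  simp [hsegR]

lemma nodup_vsegU (x a : ℤ) (len : ℕ) : (vsegU x a len).Nodup := by
  refine List.Nodup.map ?_ (List.nodup_range)
  intro i j h; have := congrArg Prod.snd h; simp at this; omega
lemma nodup_vsegD (x a : ℤ) (len : ℕ) : (vsegD x a len).Nodup := by
  refine List.Nodup.map ?_ (List.nodup_range)
  intro i j h; have := congrArg Prod.snd h; simp at this; omega
lemma nodup_hsegR (y a : ℤ) (len : ℕ) : (hsegR y a len).Nodup := by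
  refine List.Nodup.map ?_ (List.nodup_range)
  intro i j h; have := congrArg Prod.fst h; simp at this; omega

lemma chain'_vsegU (x a : ℤ) (len : ℕ) : (vsegU x a len).Chain' GridAdj := by
  apply chain'_map_range; intro i hi; simp only [GridAdj]; simp; try omega
lemma chain'_vsegD (x a : ℤ) (len : ℕ) : (vsegD x a len).Chain' GridAdj := by
  apply chain'_map_range; intro i hi; simp only [GridAdj]; simp; try omega
lemma chain'_hsegR (y a : ℤ) (len : ℕ) : (hsegR y a len).Chain' GridAdj := by
  apply chain'_map_range; intro i hi; simp only [GridAdj]; simp; try omega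

lemma head?_range_map {α : Type*} (f : ℕ → α) {len : ℕ} (h : 0 < len) :
    ((List.range len).map f).head? = some (f 0) := by
  obtain ⟨len, rfl⟩ := Nat.exists_eq_succ_of_ne_zero (Nat.pos_iff_ne_zero.mp h)
  rw [List.range_succ_eq_map]
  simp

lemma getLast?_range_map {α : Type*} (f : ℕ → α) {len : ℕ} (h : 0 < len) :
    ((List.range len).map f).getLast? = some (f (len - 1)) := by
  obtain ⟨l, rfl⟩ := Nat.exists_eq_succ_of_ne_zero (Nat.pos_iff_ne_zero.mp h)
  rw [List.range_succ]
  simp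

lemma head?_vsegU (x a : ℤ) {len : ℕ} (h : 0 < len) : (vsegU x a len).head? = some (x, a) := by
  rw [vsegU, head?_range_map _ h]; simp
lemma head?_vsegD (x a : ℤ) {len : ℕ} (h : 0 < len) : (vsegD x a len).head? = some (x, a) := by
  rw [vsegD, head?_range_map _ h]; simp
lemma head?_hsegR (y a : ℤ) {len : ℕ} (h : 0 < len) : (hsegR y a len).head? = some (a, y) := by
  rw [hsegR, head?_range_map _ h]; simp
lemma getLast?_vsegU (x a : ℤ) {len : ℕ} (h : 0 < len) :
    (vsegU x a len).getLast? = some (x, a + len - 1) := by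
  rw [vsegU, getLast?_range_map _ h]
  congr 2; push_cast [Nat.cast_sub h]; ring
lemma getLast?_vsegD (x a : ℤ) {len : ℕ} (h : 0 < len) :
    (vsegD x a len).getLast? = some (x, a - len + 1) := by
  rw [vsegD, getLast?_range_map _ h]
  congr 2; push_cast [Nat.cast_sub h]; ring
lemma getLast?_hsegR (y a : ℤ) {len : ℕ} (h : 0 < len) :
    (hsegR y a len).getLast? = some (a + len - 1, y) := by
  rw [hsegR, getLast?_range_map _ h]
  congr 2; push_cast [Nat.cast_sub h]; ring

def pairs : ℤ → List ℕ → List (ℤ × ℤ)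
  | _, [] => []
  | x, d :: ds => vsegU x 2 (1 + d) ++ vsegD (x - 1) (2 + d) (1 + d) ++ pairs (x - 2) ds

lemma mem_pairs {x : ℤ} {ds : List ℕ} {v : ℤ × ℤ} :
    v ∈ pairs x ds ↔ ∃ i : ℕ, i < ds.length ∧
      (v.1 = x - 2*i ∨ v.1 = x - 2*i - 1) ∧ 2 ≤ v.2 ∧ v.2 ≤ 2 + ds.getD i 0 := by
  induction ds generalizing x with
  | nil => simp [pairs]
  | cons d ds ih =>
    simp only [pairs, List.mem_append, mem_vsegU, mem_vsegD, ih]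
    constructor
    · rintro ((⟨h1,h2,h3⟩|⟨h1,h2,h3⟩)|⟨i,hi,h1,h2,h3⟩)
      · exact ⟨0, by simp, by simp; omega⟩
      · exact ⟨0, by simp, by simp; omega⟩
      · refine ⟨i+1, by simpa using hi, ?_⟩
        push_cast
        refine ⟨?_, h2, by simpa using h3⟩
        rcases h1 with h|h <;> [left;right] <;> omega
    · rintro ⟨i, hi, h1, h2, h3⟩
      cases i with
      | zero =>
        simp at h1 h3
        rcases h1 with h|h
        · left; left; push_cast; omega
        · left; right; push_cast; omega
      | succ i =>
        right
        refine ⟨i, by simpa using hi, ?_, h2, by simpa using h3⟩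
        rcases h1 with h|h <;> [left;right] <;> push_cast at h ⊢ <;> omega

lemma length_pairs (x : ℤ) (ds : List ℕ) :
    (pairs x ds).length = 2 * ds.length + 2 * ds.sum := by
  induction ds generalizing x with
  | nil => simp [pairs]
  | cons d ds ih => simp [pairs, length_vsegU, length_vsegD, ih]; omega

lemma head?_pairs {x : ℤ} {d : ℕ} {ds : List ℕ} :
    (pairs x (d :: ds)).head? = some (x, 2) := by
  rw [pairs]
  rw [List.head?_append, List.head?_append, head?_vsegU _ _ (by omega)]
  rfl

lemma getLast?_pairs {x : ℤ} {ds : List ℕ} (h : ds ≠ []) :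
    (pairs x ds).getLast? = some (x - 2 * ds.length + 1, 2) := by
  induction ds generalizing x with
  | nil => simp at h
  | cons d ds ih =>
    rw [pairs, List.getLast?_append, List.getLast?_append]
    rcases List.eq_nil_or_concat ds with rfl | hcc
    · rw [pairs]
      simp only [List.getLast?_nil, Option.none_or]
      rw [getLast?_vsegD _ _ (by omega)]
      simp only [Option.some_or, Option.some.injEq, Prod.mk.injEq, List.length_cons,
        List.length_nil]
      push_cast
      omega
    · have hne : ds ≠ [] := by rintro rfl; simp_all
      rw [ih hne]
      simp only [Option.some_or, Option.some.injEq, Prod.mk.injEq, List.length_cons]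
      push_cast
      exact ⟨by omega, trivial⟩

lemma nodup_pairs (x : ℤ) (ds : List ℕ) : (pairs x ds).Nodup := by
  induction ds generalizing x with
  | nil => simp [pairs]
  | cons d ds ih =>
    rw [pairs]
    rw [List.nodup_append, List.nodup_append]
    refine ⟨⟨nodup_vsegU _ _ _, nodup_vsegD _ _ _, ?_⟩, ih _, ?_⟩
    · intro v hv v' hv' hvv; rw [← hvv] at hv'
      rw [mem_vsegU] at hv; rw [mem_vsegD] at hv'
      omega
    · intro v hv v' hv' hvv; rw [← hvv] at hv'
      rw [mem_pairs] at hv'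
      obtain ⟨i, hi, h1, h2, h3⟩ := hv'
      simp only [List.mem_append, mem_vsegU, mem_vsegD] at hv
      rcases hv with ⟨h,_⟩|⟨h,_⟩ <;> omega

lemma chain'_pairs (x : ℤ) (ds : List ℕ) : (pairs x ds).Chain' GridAdj := by
  induction ds generalizing x with
  | nil => simp [pairs]; exact List.isChain_nil
  | cons d ds ih =>
    rw [pairs, List.append_assoc]
    apply (chain'_vsegU x 2 (1+d)).append
    · apply (chain'_vsegD (x-1) (2+d) (1+d)).append (ih _)
      intro a ha b hb
      rw [getLast?_vsegD _ _ (by omega)] at ha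
      rcases ds with _ | ⟨d', ds⟩
      · simp [pairs] at hb
      · rw [head?_pairs] at hb
        simp at ha hb
        subst ha hb
        simp [GridAdj]
        try omega
    · intro a ha b hb
      rw [getLast?_vsegU _ _ (by omega)] at ha
      rw [List.head?_append, head?_vsegD _ _ (by omega)] at hb
      simp at ha hb
      subst ha hb
      simp [GridAdj]
      try omega

def teethL (x : ℤ) : ℤ → ℕ → List (ℤ × ℤ)
  | _, 0 => []
  | y, t+1 => [(x, y), (x+1, y), (x+1, y+1), (x, y+1)] ++ teethL x (y+2) t

lemma mem_teethL {x y : ℤ} {t : ℕ} {v : ℤ × ℤ} :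
    v ∈ teethL x y t ↔ (v.1 = x ∨ v.1 = x+1) ∧ y ≤ v.2 ∧ v.2 < y + 2*t := by
  induction t generalizing y with
  | zero => simp [teethL]
  | succ t ih =>
    rw [teethL]
    simp only [List.mem_append, ih, List.mem_cons, List.not_mem_nil, or_false]
    constructor
    · rintro ((rfl|rfl|rfl|rfl)|⟨h1,h2,h3⟩) <;> simp <;> push_cast <;> omega
    · rintro ⟨h1, h2, h3⟩
      by_cases hy : y + 2 ≤ v.2
      · right; push_cast; omega
      · left
        have hv : v = (x, y) ∨ v = (x+1, y) ∨ v = (x+1, y+1) ∨ v = (x, y+1) := by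
          obtain ⟨a, b⟩ := v
          simp only [Prod.mk.injEq]
          simp at h1 h2 h3
          omega
        rcases hv with rfl|rfl|rfl|rfl <;> simp

lemma length_teethL (x y : ℤ) (t : ℕ) : (teethL x y t).length = 4 * t := by
  induction t generalizing y with
  | zero => simp [teethL]
  | succ t ih => rw [teethL]; simp [ih]; try omega

lemma nodup_teethL (x y : ℤ) (t : ℕ) : (teethL x y t).Nodup := by
  induction t generalizing y with
  | zero => simp [teethL]
  | succ t ih =>
    rw [teethL, List.nodup_append]
    refine ⟨?_, ih _, ?_⟩
    · simp [Prod.ext_iff]; try omega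
    · intro v hv v' hv' hvv; rw [← hvv] at hv'
      rw [mem_teethL] at hv'
      simp only [List.mem_cons, List.not_mem_nil, or_false] at hv
      rcases hv with rfl|rfl|rfl|rfl <;> simp at hv' <;> omega
      done

lemma head?_teethL (x y : ℤ) {t : ℕ} (h : 0 < t) : (teethL x y t).head? = some (x, y) := by
  obtain ⟨t, rfl⟩ := Nat.exists_eq_succ_of_ne_zero (Nat.pos_iff_ne_zero.mp h)
  rw [teethL]; rfl

lemma getLast?_teethL (x y : ℤ) {t : ℕ} (h : 0 < t) :
    (teethL x y t).getLast? = some (x, y + 2*t - 1) := by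
  induction t generalizing y with
  | zero => omega
  | succ t ih =>
    rw [teethL, List.getLast?_append]
    rcases Nat.eq_zero_or_pos t with rfl|ht
    · rw [teethL]
      simp only [List.getLast?_nil, Option.none_or]
      simp [List.getLast?]
      push_cast; ring
    · rw [ih _ ht]
      simp only [Option.some_or]
      congr 2
      push_cast; ring

lemma chain'_teethL (x y : ℤ) (t : ℕ) : (teethL x y t).Chain' GridAdj := by
  induction t generalizing y with
  | zero => simp [teethL]; exact List.isChain_nil
  | succ t ih =>
    rw [teethL]
    refine List.IsChain.append ?_ (ih _) ?_
    · simp [List.Chain', List.isChain_cons_cons, GridAdj]; try omega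
    · intro a ha b hb
      rcases Nat.eq_zero_or_pos t with rfl|ht
      · rw [teethL] at hb; simp at hb
      · rw [head?_teethL _ _ ht] at hb
        simp [List.getLast?] at ha
        subst ha
        simp at hb
        subst hb
        simp [GridAdj]

lemma chain'_closed {l : List (ℤ × ℤ)} {a b : ℤ × ℤ} (hh : l.head? = some a)
    (hl : l.getLast? = some b) (hchain : l.Chain' GridAdj) (hab : GridAdj b a) :
    (l ++ l.take 1).Chain' GridAdj := by
  cases l with
  | nil => simp at hh
  | cons c l' =>
    obtain rfl : c = a := by simpa using hh
    rw [List.take_succ_cons, List.take_zero]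
    apply hchain.append (List.isChain_singleton c)
    intro x hx y hy
    simp only [List.head?_cons, Option.mem_def, Option.some.injEq] at hy
    subst hy
    rw [Option.mem_def, hl] at hx
    cases hx
    exact hab

lemma gridAdj_iff {u v : ℤ × ℤ} :
    GridAdj u v ↔ (u.1 - v.1).natAbs + (u.2 - v.2).natAbs = 1 := Iff.rfl

lemma cycEven_spec (m n : ℤ) (hn : 2 ≤ n) (w : ℕ) (ds : List ℕ)
    (hw2 : 2 ≤ w) (hwm : (w:ℤ) ≤ m) (hlen : 2 * ds.length = w)
    (hds : ∀ i : ℕ, ((ds.getD i 0 : ℤ)) ≤ n - 2) :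
    ∃ l : List (ℤ × ℤ), IsGridCycle (RectV m n) l ∧
      l.length = w + 2*ds.length + 2*ds.sum := by
  have hne : ds ≠ [] := by rintro rfl; simp at hlen; omega
  obtain ⟨d, ds', rfl⟩ := List.exists_cons_of_ne_nil hne
  refine ⟨hsegR 1 1 w ++ pairs (w:ℤ) (d :: ds'), ⟨?_, ?_, ?_, ?_⟩, ?_⟩
  · simp [length_hsegR, length_pairs]; omega
  · intro v hv
    simp only [List.mem_append, mem_hsegR, mem_pairs] at hv
    simp only [RectV, Set.mem_setOf_eq]
    rcases hv with ⟨h1, h2, h3⟩ | ⟨i, hi, h1, h2, h3⟩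
    · omega
    · have := hds i; omega
  · rw [List.nodup_append]
    refine ⟨nodup_hsegR _ _ _, nodup_pairs _ _, ?_⟩
    intro v hv v' hv' hvv; rw [← hvv] at hv'
    rw [mem_hsegR] at hv
    rw [mem_pairs] at hv'
    obtain ⟨i, _, _, _, _⟩ := hv'
    omega
  · apply chain'_closed (a := ((1:ℤ), (1:ℤ))) (b := ((1:ℤ), (2:ℤ)))
    · rw [List.head?_append, head?_hsegR _ _ (by omega)]
      simp
    · rw [List.getLast?_append, getLast?_pairs (by simp)]
      simp only [Option.some_or, Option.some.injEq, Prod.mk.injEq]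
      refine ⟨?_, trivial⟩
      push_cast at hlen ⊢
      omega
    · refine (chain'_hsegR _ _ _).append (chain'_pairs _ _) ?_
      intro a ha b hb
      rw [getLast?_hsegR _ _ (by omega)] at ha
      rw [head?_pairs] at hb
      simp only [Option.mem_def, Option.some.injEq] at ha hb
      subst ha; subst hb
      simp [GridAdj]
    · simp [GridAdj]
  · simp [length_hsegR, length_pairs]; ring

lemma cycOdd_spec (m n : ℤ) (hn : 2 ≤ n) (w : ℕ) (ds : List ℕ)
    (hw2 : 3 ≤ w) (hwm : (w:ℤ) ≤ m) (hlen : 2 * ds.length = w - 1)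
    (hds : ∀ i : ℕ, ((ds.getD i 0 : ℤ)) ≤ n - 2) :
    ∃ l : List (ℤ × ℤ), IsGridCycle (RectV m n) l ∧
      l.length = w + 1 + 2*ds.length + 2*ds.sum := by
  have hne : ds ≠ [] := by rintro rfl; simp at hlen; omega
  obtain ⟨d, ds', rfl⟩ := List.exists_cons_of_ne_nil hne
  refine ⟨hsegR 1 1 w ++ [((w:ℤ), 2)] ++ pairs ((w:ℤ) - 1) (d :: ds'), ⟨?_, ?_, ?_, ?_⟩, ?_⟩
  · simp [length_hsegR, length_pairs]; omega
  · intro v hv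
    simp only [List.mem_append, mem_hsegR, mem_pairs, List.mem_singleton] at hv
    simp only [RectV, Set.mem_setOf_eq]
    rcases hv with (⟨h1, h2, h3⟩ | rfl) | ⟨i, hi, h1, h2, h3⟩
    · omega
    · simp; omega
    · have := hds i; omega
  · rw [List.append_assoc, List.nodup_append, List.nodup_append]
    refine ⟨nodup_hsegR _ _ _, ⟨List.nodup_singleton _, nodup_pairs _ _, ?_⟩, ?_⟩
    · intro v hv v' hv' hvv; rw [← hvv] at hv'
      simp only [List.mem_singleton] at hv
      subst hv
      rw [mem_pairs] at hv'
      obtain ⟨i, _, h, _, _⟩ := hv'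
      simp at h
      omega
    · intro v hv v' hv' hvv; rw [← hvv] at hv'
      rw [mem_hsegR] at hv
      simp only [List.mem_append, List.mem_singleton, mem_pairs] at hv'
      rcases hv' with rfl | ⟨i, _, _, _, _⟩
      · simp at hv; try omega
      · omega
  · apply chain'_closed (a := ((1:ℤ), (1:ℤ))) (b := ((1:ℤ), (2:ℤ)))
    · rw [List.append_assoc, List.head?_append, head?_hsegR _ _ (by omega)]
      simp
    · rw [List.append_assoc, List.getLast?_append, List.getLast?_append,
        getLast?_pairs (by simp)]
      simp only [Option.some_or, Option.some.injEq, Prod.mk.injEq]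
      refine ⟨?_, trivial⟩
      push_cast at hlen ⊢
      omega
    · rw [List.append_assoc]
      refine (chain'_hsegR _ _ _).append ?_ ?_
      · refine (List.isChain_singleton _).append (chain'_pairs _ _) ?_
        intro a ha b hb
        rw [head?_pairs] at hb
        simp only [List.getLast?_singleton, Option.mem_def, Option.some.injEq] at ha hb
        subst ha; subst hb
        simp [GridAdj]
      · intro a ha b hb
        rw [getLast?_hsegR _ _ (by omega)] at ha
        rw [List.head?_append] at hb
        simp only [List.head?_cons, Option.some_or, Option.mem_def, Option.some.injEq] at ha hb
        subst ha; subst hb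
        simp [GridAdj]
    · simp [GridAdj]
  · simp [length_hsegR, length_pairs]; ring

set_option maxHeartbeats 2000000 in
lemma cycTeeth_spec (m n : ℤ) (w t : ℕ) (ds : List ℕ)
    (hw : 3 ≤ w) (hwm : (w:ℤ) ≤ m) (ht : 1 ≤ t) (htn : 2 + 2*(t:ℤ) ≤ n)
    (hlen : 2 * ds.length = w - 3) (hds : ∀ i : ℕ, ((ds.getD i 0 : ℤ)) ≤ n - 2) :
    ∃ l : List (ℤ × ℤ), IsGridCycle (RectV m n) l ∧
      l.length = w + 2 + 4*t + (n - 2 - 2*(t:ℤ)).toNat + (n-1).toNat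
        + 2*ds.length + 2*ds.sum := by
  set u : ℕ := (n - 2 - 2*(t:ℤ)).toNat with hu
  set A1 := hsegR 1 1 w with hA1
  set A2 : List (ℤ × ℤ) := [((w:ℤ), 2), ((w:ℤ)-1, 2)] with hA2
  set A4 := teethL ((w:ℤ)-1) 3 t with hA4
  set A5 := vsegU ((w:ℤ)-1) (3+2*(t:ℤ)) u with hA5
  set A6 := vsegD ((w:ℤ)-2) n (n-1).toNat with hA6
  set A7 := pairs ((w:ℤ)-3) ds with hA7
  have hmemA4 : ∀ v ∈ A4, (v.1 = (w:ℤ)-1 ∨ v.1 = (w:ℤ)) ∧ 3 ≤ v.2 ∧ v.2 ≤ 2 + 2*t := by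
    intro v hv; rw [hA4, mem_teethL] at hv; push_cast at hv ⊢; omega
  have hmemA5 : ∀ v ∈ A5, v.1 = (w:ℤ)-1 ∧ 3 + 2*(t:ℤ) ≤ v.2 ∧ v.2 ≤ n := by
    intro v hv; rw [hA5, mem_vsegU] at hv; omega
  have hmemA6 : ∀ v ∈ A6, v.1 = (w:ℤ)-2 ∧ 2 ≤ v.2 ∧ v.2 ≤ n := by
    intro v hv; rw [hA6, mem_vsegD] at hv; omega
  have hmemA7 : ∀ v ∈ A7, 1 ≤ v.1 ∧ v.1 ≤ (w:ℤ)-3 ∧ 2 ≤ v.2 ∧ v.2 ≤ n := by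
    intro v hv; rw [hA7, mem_pairs] at hv
    obtain ⟨i, hi, h1, h2, h3⟩ := hv
    have := hds i
    omega
  have hmemA1 : ∀ v ∈ A1, 1 ≤ v.1 ∧ v.1 ≤ (w:ℤ) ∧ v.2 = 1 := by
    intro v hv; rw [hA1, mem_hsegR] at hv; omega
  refine ⟨A1 ++ (A2 ++ (A4 ++ (A5 ++ (A6 ++ A7)))), ⟨?_, ?_, ?_, ?_⟩, ?_⟩
  · simp only [List.length_append, hA1, length_hsegR]
    omega
  · intro v hv
    simp only [List.mem_append] at hv
    simp only [RectV, Set.mem_setOf_eq]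
    rcases hv with h|h|h|h|h|h
    · have := hmemA1 v h; omega
    · rcases List.mem_pair.mp h with rfl|rfl <;> simp <;> omega
    · have := hmemA4 v h; push_cast at this ⊢; omega
    · have := hmemA5 v h; omega
    · have := hmemA6 v h; omega
    · have := hmemA7 v h; omega
  · rw [List.nodup_append, List.nodup_append, List.nodup_append, List.nodup_append,
      List.nodup_append]
    refine ⟨nodup_hsegR _ _ _, ⟨?_, ⟨nodup_teethL _ _ _, ⟨nodup_vsegU _ _ _,
      ⟨nodup_vsegD _ _ _, nodup_pairs _ _, ?_⟩, ?_⟩, ?_⟩, ?_⟩, ?_⟩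
    · rw [hA2]; simp [Prod.ext_iff]; omega
    · intro v h6 v' h7 hvv; rw [← hvv] at h7
      have := hmemA6 v h6; have := hmemA7 v h7; omega
    · intro v h5 v' h' hvv; rw [← hvv] at h'
      have := hmemA5 v h5
      simp only [List.mem_append] at h'
      rcases h' with h|h
      · have := hmemA6 v h; omega
      · have := hmemA7 v h; omega
    · intro v h4 v' h' hvv; rw [← hvv] at h'
      have := hmemA4 v h4
      simp only [List.mem_append] at h'
      rcases h' with h|h|h
      · have := hmemA5 v h; omega
      · have := hmemA6 v h; omega
      · have := hmemA7 v h; omega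
    · intro v h2 v' h' hvv; rw [← hvv] at h'
      have hv2 : (v.1 = (w:ℤ) ∨ v.1 = (w:ℤ)-1) ∧ v.2 = 2 := by
        rw [hA2] at h2
        rcases List.mem_pair.mp h2 with rfl|rfl <;> simp
      simp only [List.mem_append] at h'
      rcases h' with h|h|h|h
      · have := hmemA4 v h; omega
      · have := hmemA5 v h; omega
      · have := hmemA6 v h; omega
      · have := hmemA7 v h; omega
    · intro v h1 v' h' hvv; rw [← hvv] at h'
      have := hmemA1 v h1
      simp only [List.mem_append] at h'
      rcases h' with h|h|h|h|h
      · have hv2 : v.2 = 2 := by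
          rw [hA2] at h; rcases List.mem_pair.mp h with rfl|rfl <;> simp
        omega
      · have := hmemA4 v h; omega
      · have := hmemA5 v h; omega
      · have := hmemA6 v h; omega
      · have := hmemA7 v h; omega
  · apply chain'_closed (a := ((1:ℤ), (1:ℤ))) (b := ((1:ℤ), (2:ℤ)))
    · rw [List.head?_append, hA1, head?_hsegR _ _ (by omega)]
      simp
    · rw [List.getLast?_append, List.getLast?_append, List.getLast?_append,
        List.getLast?_append, List.getLast?_append]
      rcases List.eq_nil_or_concat ds with rfl|hcc
      · have : A7 = [] := by rw [hA7, pairs]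
        rw [this, hA6, getLast?_vsegD _ _ (by omega)]
        simp only [List.getLast?_nil, Option.none_or, Option.some_or, Option.some.injEq,
          Prod.mk.injEq]
        constructor
        · simp at hlen; push_cast; omega
        · omega
      · have hne : ds ≠ [] := by rintro rfl; simp_all
        rw [hA7, getLast?_pairs hne]
        simp only [Option.some_or, Option.some.injEq, Prod.mk.injEq]
        refine ⟨?_, trivial⟩
        push_cast at hlen ⊢
        omega
    · refine (chain'_hsegR _ _ _).append ?_ ?_
      · refine (?_ : A2.Chain' GridAdj).append ?_ ?_
        · rw [hA2]; simp [List.Chain', GridAdj]; try omega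
        · refine (chain'_teethL _ _ _).append ?_ ?_
          · refine (chain'_vsegU _ _ _).append ?_ ?_
            · refine (chain'_vsegD _ _ _).append (chain'_pairs _ _) ?_
              intro a ha b hb
              rw [getLast?_vsegD _ _ (by omega)] at ha
              rcases List.eq_nil_or_concat ds with rfl|hcc
              · rw [hA7, pairs] at hb; simp at hb
              · have hne : ds ≠ [] := by rintro rfl; simp_all
                obtain ⟨d', ds'', rfl⟩ := List.exists_cons_of_ne_nil hne
                rw [hA7, head?_pairs] at hb
                simp only [Option.mem_def, Option.some.injEq] at ha hb
                subst ha; subst hb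
                simp [GridAdj]; try omega
            · intro a ha b hb
              by_cases hu0 : u = 0
              · rw [hu0] at ha; simp [vsegU] at ha
              · rw [getLast?_vsegU _ _ (by omega)] at ha
                rw [List.head?_append, hA6, head?_vsegD _ _ (by omega)] at hb
                simp only [Option.mem_def, Option.some.injEq, Option.some_or] at ha hb
                subst ha; subst hb
                simp only [GridAdj]
                simp
                have : (u:ℤ) = n - 2 - 2*t := by rw [hu]; omega
                omega
          · intro a ha b hb
            rw [getLast?_teethL _ _ (by omega)] at ha
            simp only [Option.mem_def, Option.some.injEq] at ha
            subst ha
            by_cases hu0 : u = 0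
            · have : A5 = [] := by rw [hA5, hu0, vsegU]; simp
              rw [this, List.nil_append, List.head?_append, hA6,
                head?_vsegD _ _ (by omega)] at hb
              simp only [Option.mem_def, Option.some.injEq, Option.some_or] at hb
              subst hb
              have : n = 2 + 2*(t:ℤ) := by rw [hu] at hu0; omega
              simp only [GridAdj]; simp; omega
            · rw [List.head?_append, hA5, head?_vsegU _ _ (by omega)] at hb
              simp only [Option.mem_def, Option.some.injEq, Option.some_or] at hb
              subst hb
              simp only [GridAdj]; simp
        · intro a ha b hb
          rw [hA2] at ha
          simp only [List.getLast?] at ha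
          rw [List.head?_append, hA4, head?_teethL _ _ (by omega)] at hb
          simp only [Option.mem_def, Option.some.injEq, Option.some_or] at ha hb
          subst ha; subst hb
          simp only [GridAdj]; simp
      · intro a ha b hb
        rw [getLast?_hsegR _ _ (by omega)] at ha
        rw [List.head?_append, hA2] at hb
        simp only [List.head?_cons, Option.some_or, Option.mem_def, Option.some.injEq] at ha hb
        subst ha; subst hb
        simp only [GridAdj]; simp
        try omega
    · simp [GridAdj]
  · simp only [List.length_append, hA1, hA2, hA4, hA5, hA6, hA7, length_hsegR,
      length_teethL, length_vsegU, length_vsegD, length_pairs, List.length_cons,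
      List.length_nil]
    omega

lemma sum_minfill (D s p : ℕ) :
    ((List.range p).map (fun i => min D (s - i*D))).sum = min s (p*D) := by
  induction p generalizing s with
  | zero => simp
  | succ p ih =>
    rw [List.range_succ_eq_map, List.map_cons, List.map_map, List.sum_cons]
    have h2 : ((fun i => min D (s - i * D)) ∘ Nat.succ) = fun i => min D ((s - D) - i * D) := by
      funext i
      simp only [Function.comp_apply, Nat.succ_mul]
      congr 1
      omega
    rw [h2, ih]
    have h3 : (p+1)*D = p*D + D := by ring
    rw [h3]
    generalize p*D = q
    omega

lemma getD_minfill_le (p D s i : ℕ) :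
    ((List.range p).map (fun j => min D (s - j*D))).getD i 0 ≤ D := by
  rcases Nat.lt_or_ge i p with h|h
  · rw [List.getD_eq_getElem?_getD]
    simp [List.getElem?_map, List.getElem?_range, h]
  · rw [List.getD_eq_default]
    · omega
    · simp [h]

lemma getD_replicate_le (p D i : ℕ) : ((List.replicate p D).getD i 0) ≤ D := by
  rcases Nat.lt_or_ge i p with h|h
  · rw [List.getD_eq_getElem?_getD]
    simp [List.getElem?_replicate, h]
  · rw [List.getD_eq_default]
    · omega
    · simp [h]

lemma exists_cycle (m n : ℤ) (hm : 1 < m) (hn : 1 < n) (k : ℕ) (hk : Even k)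
    (hk4 : 4 ≤ k) (hkmn : (k:ℤ) ≤ m*n) :
    ∃ l : List (ℤ × ℤ), IsGridCycle (RectV m n) l ∧ l.length = k := by
  obtain ⟨r, rfl⟩ := hk
  have hr2 : 2 ≤ r := by omega
  rcases le_or_gt (r:ℤ) m with hrm | hrm
  · -- rectangle 2 × r
    rcases Nat.even_or_odd r with hre | hro
    · obtain ⟨c, hc⟩ := hre
      obtain ⟨l, hl, hlen⟩ := cycEven_spec m n (by omega) r (List.replicate c 0)
        hr2 hrm (by simp; omega) (fun i => by
          have := getD_replicate_le c 0 i; omega)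
      exact ⟨l, hl, by simp at hlen; omega⟩
    · obtain ⟨c, hc⟩ := hro
      obtain ⟨l, hl, hlen⟩ := cycOdd_spec m n (by omega) r (List.replicate c 0)
        (by omega) hrm (by simp; omega) (fun i => by
          have := getD_replicate_le c 0 i; omega)
      exact ⟨l, hl, by simp at hlen; omega⟩
  · -- full-width constructions
    have hm0 : (0:ℤ) ≤ m := by omega
    obtain ⟨w, hw⟩ : ∃ w : ℕ, w = m.toNat := ⟨_, rfl⟩
    have hwm : (w:ℤ) = m := by rw [hw]; exact Int.toNat_of_nonneg hm0
    have hw2 : 2 ≤ w := by omega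
    have hrk : 2*(r:ℤ) ≤ m*n := by push_cast at hkmn; omega
    have hn3 : 3 ≤ n := by
      by_contra h
      have hn2 : n = 2 := by omega
      rw [hn2] at hrk
      omega
    obtain ⟨D, hD⟩ : ∃ D : ℕ, D = (n-2).toNat := ⟨_, rfl⟩
    have hDn : (D:ℤ) = n - 2 := by rw [hD]; exact Int.toNat_of_nonneg (by omega)
    have hD1 : 1 ≤ D := by omega
    have hsr : w ≤ r := by omega
    obtain ⟨s, hs⟩ : ∃ s : ℕ, s = r - w := ⟨_, rfl⟩
    have hexp : (m-1)*(n-2) = m*n - 2*m - n + 2 := by ring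
    have hexp2 : m*(n-2) = m*n - 2*m := by ring
    rcases Nat.even_or_odd w with hwe | hwo
    · -- m even; s ≤ p*D automatically
      obtain ⟨p, hpw⟩ := hwe
      have hcast : ((p*D : ℕ):ℤ) = (p:ℤ)*(D:ℤ) := by push_cast; ring
      have hw2p : 2*p = w := by omega
      have hq : 2*(p:ℤ) = m := by omega
      have h2pD : 2*((p:ℤ)*(D:ℤ)) = m*(n-2) := by rw [hDn, ← hq]; ring
      have hspD : s ≤ p*D := by omega
      obtain ⟨l, hl, hlen⟩ := cycEven_spec m n (by omega) w
        ((List.range p).map (fun i => min D (s - i*D))) hw2 (by omega)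
        (by simp; omega)
        (fun i => by have := getD_minfill_le p D s i; omega)
      refine ⟨l, hl, ?_⟩
      rw [hlen, sum_minfill]
      simp
      omega
    · -- m odd
      obtain ⟨p, hpw⟩ := hwo
      have hcast : ((p*D : ℕ):ℤ) = (p:ℤ)*(D:ℤ) := by push_cast; ring
      rcases le_or_gt s (p*D) with hspD | hspD
      · have hw2p : 2*p = w - 1 := by omega
        obtain ⟨l, hl, hlen⟩ := cycOdd_spec m n (by omega) w
          ((List.range p).map (fun i => min D (s - i*D))) (by omega) (by omega)
          (by simp; omega)
          (fun i => by have := getD_minfill_le p D s i; omega)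
        refine ⟨l, hl, ?_⟩
        rw [hlen, sum_minfill]
        simp
        omega
      · -- teeth case
        obtain ⟨t, htdef⟩ : ∃ t : ℕ, t = s - p*D := ⟨_, rfl⟩
        have ht1 : 1 ≤ t := by omega
        have hw3 : 3 ≤ w := by omega
        have hq : 2*(p:ℤ) = m - 1 := by omega
        have h2pD : 2*((p:ℤ)*(D:ℤ)) = (m-1)*(n-2) := by rw [hDn, ← hq]; ring
        have htn : 2 + 2*(t:ℤ) ≤ n := by omega
        obtain ⟨l, hl, hlen⟩ := cycTeeth_spec m n w t (List.replicate (p-1) D)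
          hw3 (by omega) ht1 htn (by simp; omega)
          (fun i => by have := getD_replicate_le (p-1) D i; omega)
        refine ⟨l, hl, ?_⟩
        rw [hlen]
        simp only [List.length_replicate, List.sum_replicate, smul_eq_mul]
        have hu : ((n - 2 - 2*(t:ℤ)).toNat : ℤ) = n - 2 - 2*t := Int.toNat_of_nonneg (by omega)
        have hv : (((n:ℤ)-1).toNat : ℤ) = n - 1 := Int.toNat_of_nonneg (by omega)
        have h1 : (((p:ℕ)-1 : ℕ):ℤ) = (p:ℤ)-1 := by omega
        have hcast2 : (((p-1)*D : ℕ):ℤ) = ((p:ℤ)-1)*(D:ℤ) := by rw [Nat.cast_mul, h1]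
        have hx : ((p:ℤ)-1)*(D:ℤ) = (p:ℤ)*D - D := by ring
        omega

lemma cyc_adj {l : List (ℤ × ℤ)} (h : (l ++ l.take 1).Chain' GridAdj)
    (hlen : 1 ≤ l.length) :
    ∀ i : ℕ, (hi : i < l.length) →
      GridAdj (l[i]'hi) (l[(i+1) % l.length]'(Nat.mod_lt _ (by omega))) := by
  intro i hi
  rw [List.Chain', List.isChain_iff_getElem] at h
  have hL : (l ++ l.take 1).length = l.length + 1 := by
    simp [List.length_take]
    omega
  have h1 : i < (l ++ l.take 1).length - 1 := by omega
  have := h i (by omega)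
  have e1 : (l ++ l.take 1)[i]'(by omega) = l[i]'hi := by
    rw [List.getElem_append_left]
  rw [e1] at this
  rcases Nat.lt_or_ge (i+1) l.length with h2|h2
  · have e2 : (l ++ l.take 1)[i+1]'(by omega) = l[i+1]'h2 := by
      rw [List.getElem_append_left]
    rw [e2] at this
    have : (i+1) % l.length = i + 1 := Nat.mod_eq_of_lt h2
    simpa [this]
  · have hik : i + 1 = l.length := by omega
    have e2 : (l ++ l.take 1)[i+1]'(by omega) = l[0]'(by omega) := by
      rw [List.getElem_append_right (by omega)]
      simp [hik]
    rw [e2] at this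
    have hmod : (i+1) % l.length = 0 := by rw [hik, Nat.mod_self]
    simpa [hmod]

lemma parity_chain (L : List (ℤ × ℤ)) (hch : L.Chain' GridAdj) :
    ∀ a b, L.head? = some a → L.getLast? = some b →
      (2:ℤ) ∣ (a.1 + a.2 + L.length - 1 - b.1 - b.2) := by
  induction L with
  | nil => simp
  | cons c L ih =>
    intro a b ha hb
    obtain rfl : c = a := by simpa using ha
    cases L with
    | nil =>
      obtain rfl : c = b := by simpa using hb
      simp
    | cons d L' =>
      rw [List.Chain', List.isChain_cons_cons] at hch
      have hadj := hch.1
      have := ih hch.2 d b rfl (by simpa using hb)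
      simp only [List.length_cons] at this ⊢
      rw [GridAdj] at hadj
      push_cast at this ⊢
      omega

lemma even_of_cycle {l : List (ℤ × ℤ)} (h3 : 3 ≤ l.length)
    (hch : (l ++ l.take 1).Chain' GridAdj) : Even l.length := by
  obtain ⟨a, l', rfl⟩ := List.exists_cons_of_ne_nil (by
    intro h; rw [h] at h3; simp at h3 : (l : List (ℤ × ℤ)) ≠ [])
  rw [List.take_succ_cons, List.take_zero] at hch
  have := parity_chain _ hch a a (by simp) (by rw [List.getLast?_concat])
  simp only [List.length_append, List.length_cons, List.length_singleton, List.length_nil] at this ⊢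
  rw [Nat.even_iff]
  obtain ⟨q, hq⟩ := this
  omega

lemma no_line_cycle {l : List (ℤ × ℤ)} {c : ℤ} (h3 : 3 ≤ l.length) (hnd : l.Nodup)
    (hadj : ∀ i : ℕ, (hi : i < l.length) →
      GridAdj (l[i]'hi) (l[(i+1) % l.length]'(Nat.mod_lt _ (by omega))))
    (hx : ∀ v ∈ l, v.1 = c) : False := by
  have hk : 3 ≤ l.length := h3
  have hne : (Finset.univ : Finset (Fin l.length)).Nonempty :=
    ⟨⟨0, by omega⟩, Finset.mem_univ _⟩
  obtain ⟨i, -, hmax⟩ := Finset.exists_max_image Finset.univ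
    (fun i : Fin l.length => (l[(i:ℕ)]'i.isLt).2) hne
  have hik : (i:ℕ) < l.length := i.isLt
  -- define j1
  have hj1lt : ((i:ℕ)+1) % l.length < l.length := Nat.mod_lt _ (by omega)
  set j1 : ℕ := ((i:ℕ)+1) % l.length with hj1
  have hj1cases : ((i:ℕ)+1 = l.length ∧ j1 = 0) ∨ ((i:ℕ)+1 < l.length ∧ j1 = (i:ℕ)+1) := by
    rcases Nat.lt_or_ge ((i:ℕ)+1) l.length with h|h
    · right; exact ⟨h, by rw [hj1, Nat.mod_eq_of_lt h]⟩
    · left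
      have : (i:ℕ)+1 = l.length := by omega
      exact ⟨this, by rw [hj1, this, Nat.mod_self]⟩
  -- define j2
  obtain ⟨j2, hj2lt, hj2succ, hj2ne⟩ :
      ∃ j2 : ℕ, j2 < l.length ∧ (j2+1) % l.length = (i:ℕ) ∧ j2 ≠ j1 := by
    rcases Nat.eq_zero_or_pos (i:ℕ) with h0|h0
    · refine ⟨l.length - 1, by omega, ?_, ?_⟩
      · rw [Nat.sub_add_cancel (by omega), Nat.mod_self, h0]
      · omega
    · refine ⟨(i:ℕ) - 1, by omega, ?_, ?_⟩
      · rw [Nat.sub_add_cancel (by omega), Nat.mod_eq_of_lt hik]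
      · omega
  have a1 := hadj (i:ℕ) hik
  have a2 := hadj j2 hj2lt
  rw [GridAdj] at a1 a2
  have hxi := hx _ (List.getElem_mem hik)
  have hxj1 := hx _ (List.getElem_mem hj1lt)
  have hxj2 := hx _ (List.getElem_mem hj2lt)
  have hmax1 := hmax ⟨j1, hj1lt⟩ (Finset.mem_univ _)
  have hmax2 := hmax ⟨j2, hj2lt⟩ (Finset.mem_univ _)
  simp only at hmax1 hmax2
  -- rewrite index in a2
  have a2' : ((l[j2]'hj2lt).1 - (l[(i:ℕ)]'hik).1).natAbs
      + ((l[j2]'hj2lt).2 - (l[(i:ℕ)]'hik).2).natAbs = 1 := by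
    have : l[(j2+1) % l.length]'(Nat.mod_lt _ (by omega)) = l[(i:ℕ)]'hik := by
      congr 1
    rw [this] at a2
    exact a2
  have a1' : ((l[(i:ℕ)]'hik).1 - (l[j1]'hj1lt).1).natAbs
      + ((l[(i:ℕ)]'hik).2 - (l[j1]'hj1lt).2).natAbs = 1 := a1
  have hy1 : (l[j1]'hj1lt).2 = (l[(i:ℕ)]'hik).2 - 1 := by omega
  have hy2 : (l[j2]'hj2lt).2 = (l[(i:ℕ)]'hik).2 - 1 := by omega
  have heq : l[j1]'hj1lt = l[j2]'hj2lt := by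
    ext
    · rw [hxj1, hxj2]
    · rw [hy1, hy2]
  have : j1 = j2 := by
    have := (List.Nodup.get_inj_iff hnd (i := ⟨j1, hj1lt⟩) (j := ⟨j2, hj2lt⟩)).mp
      (by simpa using heq)
    simpa using this
  exact hj2ne this.symm

lemma card_bound {m n : ℤ} {l : List (ℤ × ℤ)} (hnd : l.Nodup)
    (hmem : ∀ v ∈ l, v ∈ RectV m n) (hm : 0 ≤ m) (hn : 0 ≤ n) :
    (l.length : ℤ) ≤ m * n := by
  have hsub : l.toFinset ⊆ Finset.Icc 1 m ×ˢ Finset.Icc 1 n := by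
    intro v hv
    rw [List.mem_toFinset] at hv
    have := hmem v hv
    simp only [RectV, Set.mem_setOf_eq] at this
    simp only [Finset.mem_product, Finset.mem_Icc]
    omega
  have hcard := Finset.card_le_card hsub
  rw [List.toFinset_card_of_nodup hnd, Finset.card_product, Int.card_Icc, Int.card_Icc] at hcard
  have h1 : ((m + 1 - 1).toNat : ℤ) = m := by omega
  have h2 : ((n + 1 - 1).toNat : ℤ) = n := by omega
  have : (l.length : ℤ) ≤ ((m+1-1).toNat : ℤ) * ((n+1-1).toNat : ℤ) := by
    exact_mod_cast hcard
  rw [h1, h2] at this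
  exact this

lemma gridAdj_swap {u v : ℤ × ℤ} (h : GridAdj u v) : GridAdj u.swap v.swap := by
  simp only [GridAdj, Prod.swap] at *
  omega

/-- The rectangular grid graph `R(m,n)` has a cycle with exactly `k`
vertices iff `m > 1`, `n > 1`, `k` is even and `4 ≤ k ≤ m·n`. -/
theorem cycle_of_length_k_in_rect (m n : ℤ) (k : ℕ) :
    (∃ l : List (ℤ × ℤ), IsGridCycle (RectV m n) l ∧ l.length = k) ↔
      (1 < m ∧ 1 < n ∧ Even k ∧ 4 ≤ k ∧ (k : ℤ) ≤ m * n) := by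
  constructor
  · rintro ⟨l, ⟨h3, hmem, hnd, hch⟩, rfl⟩
    have hadj := cyc_adj hch (by omega)
    have hEven : Even l.length := even_of_cycle h3 hch
    have hm1 : 1 < m := by
      by_contra h
      refine no_line_cycle (c := 1) h3 hnd hadj (fun v hv => ?_)
      have := hmem v hv
      simp only [RectV, Set.mem_setOf_eq] at this
      omega
    have hn1 : 1 < n := by
      by_contra h
      have hnd' : (l.map Prod.swap).Nodup := hnd.map Prod.swap_injective
      have hch' : (l.map Prod.swap ++ (l.map Prod.swap).take 1).Chain' GridAdj := by
        rw [← List.map_take, ← List.map_append]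
        exact List.isChain_map_of_isChain Prod.swap (fun a b hab => gridAdj_swap hab) hch
      have hadj' := cyc_adj hch' (by simp; omega)
      refine no_line_cycle (l := l.map Prod.swap) (c := 1) (by simp; omega) hnd' hadj'
        (fun v hv => ?_)
      simp only [List.mem_map] at hv
      obtain ⟨u, hu, rfl⟩ := hv
      have := hmem u hu
      simp only [RectV, Set.mem_setOf_eq] at this
      simp only [Prod.swap]
      omega
    refine ⟨hm1, hn1, hEven, ?_, ?_⟩
    · obtain ⟨c, hc⟩ := hEven
      omega
    · exact card_bound hnd hmem (by omega) (by omega)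
  · rintro ⟨hm, hn, hk, hk4, hkmn⟩
    exact exists_cycle m n hm hn k hk hk4 hkmn
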